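/- Let N ∈ (0,1), R_c > 0 and h > 0. Suppose u, w : ℝ → ℝ are twice continuously differentiable on [0,h], satisfy u''(t) = 2N² w'(t) and −R_c w''(t) + 4N² w(t) − 2N² u'(t) = 0 for all t ∈ [0,h], and u(0) = u(h) = w(0) = w(h) = 0. Then u(t) = 0 and w(t) = 0 for all t ∈ [0,h]. Consequently, for any forcing constants q, G ∈ ℝ, the reduced micropolar boundary-value problem on [0,h] has at most one pair of twice continuously differentiable solutions. -/

import Mathlib

/-- `(u, w)` is a (twice continuously differentiable) solution of the reduced
micropolar boundary-value problem on `[0, h]` with forcing constants `q, G`: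
`u'' = q + 2N² w'`, `−R_c w'' + 4N² w − 2N² u' = G` on `[0, h]`, with
homogeneous boundary conditions. -/
def IsReducedSolution (N Rc h q G : ℝ) (u w : ℝ → ℝ) : Prop :=
  ContDiffOn ℝ 2 u (Set.Icc 0 h) ∧ ContDiffOn ℝ 2 w (Set.Icc 0 h) ∧
  (∀ t ∈ Set.Icc (0 : ℝ) h,
    derivWithin (derivWithin u (Set.Icc 0 h)) (Set.Icc 0 h) t =
      q + 2 * N ^ 2 * derivWithin w (Set.Icc 0 h) t) ∧
  (∀ t ∈ Set.Icc (0 : ℝ) h,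
    -Rc * derivWithin (derivWithin w (Set.Icc 0 h)) (Set.Icc 0 h) t +
      4 * N ^ 2 * w t - 2 * N ^ 2 * derivWithin u (Set.Icc 0 h) t = G) ∧
  u 0 = 0 ∧ u h = 0 ∧ w 0 = 0 ∧ w h = 0

open MeasureTheory Set intervalIntegral

/-- A continuous nonnegative function on `[a,b]` with zero integral vanishes. -/
lemma eq_zero_of_nonneg_of_integral_zero {f : ℝ → ℝ} {a b : ℝ} (hab : a < b)
    (hc : ContinuousOn f (Set.Icc a b)) (hnn : ∀ t ∈ Set.Icc a b, 0 ≤ f t)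
    (hint : (∫ t in a..b, f t) = 0) : ∀ t ∈ Set.Icc a b, f t = 0 := by
  have huIcc : Set.uIcc a b = Set.Icc a b := uIcc_of_le hab.le
  have hfi : IntervalIntegrable f volume a b :=
    (by rw [huIcc]; exact hc : ContinuousOn f (Set.uIcc a b)).intervalIntegrable
  have hae : f =ᵐ[volume.restrict (Set.Ioc a b)] 0 := by
    rw [integral_eq_zero_iff_of_le_of_nonneg_ae hab.le ?_ hfi] at hint
    · exact hint
    · exact (ae_restrict_iff' measurableSet_Ioc).2
        (Filter.Eventually.of_forall fun x hx => hnn x (Set.Ioc_subset_Icc_self hx))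
  have hnull : volume.restrict (Set.Ioc a b) {x | ¬ f x = 0} = 0 := by
    have := hae
    rw [Filter.EventuallyEq, ae_iff] at this
    simpa using this
  intro t ht
  by_contra hne
  have hpos : 0 < f t := lt_of_le_of_ne (hnn t ht) (Ne.symm hne)
  obtain ⟨δ, hδ, hball⟩ := Metric.continuousWithinAt_iff.1 (hc t ht) (f t) hpos
  set a' := max a (t - δ) with ha'
  set b' := min b (t + δ) with hb'
  have ht1 := ht.1
  have ht2 := ht.2
  have ha'b' : a' < b' :=
    max_lt (lt_min hab (by linarith)) (lt_min (by linarith) (by linarith))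
  have hsub : Set.Ioo a' b' ⊆ {x | ¬ f x = 0} := by
    intro x hx
    have hx1 : a < x := lt_of_le_of_lt (le_max_left _ _) hx.1
    have hx2 : x ≤ b := le_of_lt (lt_of_lt_of_le hx.2 (min_le_left _ _))
    have hd : dist x t < δ := by
      rw [Real.dist_eq, abs_lt]
      have h1 := lt_of_le_of_lt (le_max_right a (t - δ)) hx.1
      have h2 := lt_of_lt_of_le hx.2 (min_le_right b (t + δ))
      constructor <;> linarith
    have hb2 := hball ⟨hx1.le, hx2⟩ hd
    rw [Real.dist_eq, abs_lt] at hb2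
    intro h0
    rw [h0] at hb2
    linarith [hb2.1]
  have hIooIoc : Set.Ioo a' b' ⊆ Set.Ioc a b := fun x hx =>
    ⟨lt_of_le_of_lt (le_max_left _ _) hx.1, le_of_lt (lt_of_lt_of_le hx.2 (min_le_left _ _))⟩
  have hzero : volume.restrict (Set.Ioc a b) (Set.Ioo a' b') = 0 :=
    measure_mono_null hsub hnull
  rw [Measure.restrict_apply measurableSet_Ioo,
    Set.inter_eq_left.2 hIooIoc, Real.volume_Ioo] at hzero
  have : (0:ℝ) < b' - a' := by linarith
  simp [ENNReal.ofReal_eq_zero, not_lt.2 this.le] at hzero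
  linarith

/-- The homogeneous problem only has the zero solution. -/
lemma hom_vanish (N Rc h : ℝ) (hN0 : 0 < N) (hN1 : N < 1) (hRc : 0 < Rc) (hh : 0 < h)
    (u w : ℝ → ℝ) (hsol : IsReducedSolution N Rc h 0 0 u w) :
    ∀ t ∈ Set.Icc (0 : ℝ) h, u t = 0 ∧ w t = 0 := by
  obtain ⟨hu, hw, heq1, heq2, hu0, huh, hw0, hwh⟩ := hsol
  set s : Set ℝ := Set.Icc 0 h with hs
  have hsU : UniqueDiffOn ℝ s := uniqueDiffOn_Icc hh
  have huIcc : Set.uIcc (0:ℝ) h = s := uIcc_of_le hh.le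
  set u1 : ℝ → ℝ := derivWithin u s with hu1def
  set w1 : ℝ → ℝ := derivWithin w s with hw1def
  set u2 : ℝ → ℝ := derivWithin u1 s with hu2def
  set w2 : ℝ → ℝ := derivWithin w1 s with hw2def
  have hu1c : ContDiffOn ℝ 1 u1 s := hu.derivWithin hsU (by norm_num)
  have hw1c : ContDiffOn ℝ 1 w1 s := hw.derivWithin hsU (by norm_num)
  have hud : DifferentiableOn ℝ u s := hu.differentiableOn (by norm_num)
  have hwd : DifferentiableOn ℝ w s := hw.differentiableOn (by norm_num)
  have hu1d : DifferentiableOn ℝ u1 s := hu1c.differentiableOn (by norm_num)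
  have hw1d : DifferentiableOn ℝ w1 s := hw1c.differentiableOn (by norm_num)
  have hcu : ContinuousOn u s := hu.continuousOn
  have hcw : ContinuousOn w s := hw.continuousOn
  have hcu1 : ContinuousOn u1 s := hu1c.continuousOn
  have hcw1 : ContinuousOn w1 s := hw1c.continuousOn
  -- Step 1 : u' - 2N² w is constant on s
  set g : ℝ → ℝ := fun t => u1 t - 2 * N ^ 2 * w t with hgdef
  set c : ℝ := g 0 with hcdef
  have hgd : DifferentiableOn ℝ g s := hu1d.sub (hwd.const_mul _)
  have hgder : ∀ x ∈ Set.Ico (0:ℝ) h, derivWithin g s x = 0 := by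
    intro x hx
    have hxs : x ∈ s := Set.Ico_subset_Icc_self hx
    rw [hgdef]
    rw [derivWithin_fun_sub (hu1d x hxs) ((hwd x hxs).const_mul _),
      derivWithin_const_mul _ (hwd x hxs)]
    have h1 := heq1 x hxs
    rw [zero_add] at h1
    show u2 x - 2 * N ^ 2 * w1 x = 0
    rw [h1]
    ring
  have hconst := constant_of_derivWithin_zero hgd hgder
  have hu1eq : ∀ t ∈ s, u1 t = 2 * N ^ 2 * w t + c := by
    intro t ht
    have h1 : g t = g 0 := hconst t ht
    have h2 : g t = u1 t - 2 * N ^ 2 * w t := rfl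
    have h3 : c = g 0 := rfl
    linarith
  -- integrability
  have hIw : IntervalIntegrable w volume 0 h :=
    (by rw [huIcc]; exact hcw : ContinuousOn w (Set.uIcc 0 h)).intervalIntegrable
  have hIu1 : IntervalIntegrable u1 volume 0 h :=
    (by rw [huIcc]; exact hcu1 : ContinuousOn u1 (Set.uIcc 0 h)).intervalIntegrable
  have hIwsq : IntervalIntegrable (fun t => w t ^ 2) volume 0 h :=
    (by rw [huIcc]; exact (hcw.pow 2) : ContinuousOn (fun t => w t ^ 2) (Set.uIcc 0 h)).intervalIntegrable
  have hIw1sq : IntervalIntegrable (fun t => w1 t ^ 2) volume 0 h :=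
    (by rw [huIcc]; exact (hcw1.pow 2) : ContinuousOn (fun t => w1 t ^ 2) (Set.uIcc 0 h)).intervalIntegrable
  -- FTC for u : ∫ u1 = u h - u 0 = 0
  have hu_ftc : (∫ t in (0:ℝ)..h, u1 t) = u h - u 0 := by
    apply integral_eq_sub_of_hasDeriv_right_of_le hh.le hcu _ hIu1
    intro x hx
    have hxs : x ∈ s := Set.Ioo_subset_Icc_self hx
    exact (((hud x hxs).hasDerivWithinAt).hasDerivAt
      (Icc_mem_nhds hx.1 hx.2)).hasDerivWithinAt
  have key1 : 2 * N ^ 2 * (∫ t in (0:ℝ)..h, w t) + c * h = 0 := by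
    have hcongr : (∫ t in (0:ℝ)..h, u1 t) = ∫ t in (0:ℝ)..h, (2 * N ^ 2 * w t + c) := by
      apply intervalIntegral.integral_congr
      intro t ht
      rw [huIcc] at ht
      exact hu1eq t ht
    rw [intervalIntegral.integral_add (hIw.const_mul _) intervalIntegrable_const,
      intervalIntegral.integral_const_mul, intervalIntegral.integral_const] at hcongr
    rw [hu_ftc, hu0, huh] at hcongr
    simp only [smul_eq_mul, sub_zero] at hcongr
    linarith
  -- w'' from the second equation
  have hw2eq : ∀ t ∈ s, w2 t = (4 * N ^ 2 * w t - 2 * N ^ 2 * u1 t) / Rc := by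
    intro t ht
    have h2 := heq2 t ht
    field_simp
    linarith
  have hcw2 : ContinuousOn w2 s := by
    apply ContinuousOn.congr (((hcw.const_smul (4 * N ^ 2)).sub
      (hcu1.const_smul (2 * N ^ 2))).div_const Rc)
    intro t ht
    simpa using hw2eq t ht
  -- FTC for w1 * w
  have hIφ : IntervalIntegrable (fun t => w2 t * w t + w1 t * w1 t) volume 0 h := by
    refine ContinuousOn.intervalIntegrable ?_
    rw [huIcc]
    exact (hcw2.mul hcw).add (hcw1.mul hcw1)
  have key2 : (∫ t in (0:ℝ)..h, (w2 t * w t + w1 t * w1 t)) = 0 := by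
    have hftc : (∫ t in (0:ℝ)..h, (w2 t * w t + w1 t * w1 t))
        = w1 h * w h - w1 0 * w 0 := by
      apply integral_eq_sub_of_hasDeriv_right_of_le hh.le (hcw1.mul hcw) _ hIφ
      intro x hx
      have hxs : x ∈ s := Set.Ioo_subset_Icc_self hx
      have hder : HasDerivWithinAt (fun t => w1 t * w t) (w2 x * w x + w1 x * w1 x) s x :=
        ((hw1d x hxs).hasDerivWithinAt).mul ((hwd x hxs).hasDerivWithinAt)
      exact (hder.hasDerivAt (Icc_mem_nhds hx.1 hx.2)).hasDerivWithinAt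
    rw [hw0, hwh] at hftc
    simpa using hftc
  -- rewrite the integrand
  have hφeq : ∀ t ∈ s, w2 t * w t + w1 t * w1 t
      = (4 * N ^ 2 * (1 - N ^ 2) * w t ^ 2 - 2 * N ^ 2 * c * w t) / Rc + w1 t ^ 2 := by
    intro t ht
    rw [hw2eq t ht, hu1eq t ht]
    field_simp
    ring
  have key2' : (∫ t in (0:ℝ)..h,
      ((4 * N ^ 2 * (1 - N ^ 2) * w t ^ 2 - 2 * N ^ 2 * c * w t) / Rc + w1 t ^ 2)) = 0 := by
    have hcg : (∫ t in (0:ℝ)..h,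
        ((4 * N ^ 2 * (1 - N ^ 2) * w t ^ 2 - 2 * N ^ 2 * c * w t) / Rc + w1 t ^ 2))
        = ∫ t in (0:ℝ)..h, (w2 t * w t + w1 t * w1 t) := by
      apply intervalIntegral.integral_congr
      intro t ht
      rw [huIcc] at ht
      exact (hφeq t ht).symm
    rw [hcg, key2]
  set A : ℝ := ∫ t in (0:ℝ)..h, w t ^ 2 with hA
  set B : ℝ := ∫ t in (0:ℝ)..h, w1 t ^ 2 with hB
  set W : ℝ := ∫ t in (0:ℝ)..h, w t with hW
  have expand : (4 * N ^ 2 * (1 - N ^ 2) * A - 2 * N ^ 2 * c * W) / Rc + B = 0 := by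
    have e : (∫ t in (0:ℝ)..h,
        ((4 * N ^ 2 * (1 - N ^ 2) * w t ^ 2 - 2 * N ^ 2 * c * w t) / Rc + w1 t ^ 2))
        = (4 * N ^ 2 * (1 - N ^ 2) * A - 2 * N ^ 2 * c * W) / Rc + B := by
      rw [intervalIntegral.integral_add
        (((hIwsq.const_mul _).sub (hIw.const_mul _)).div_const _) hIw1sq,
        intervalIntegral.integral_div,
        intervalIntegral.integral_sub (hIwsq.const_mul _) (hIw.const_mul _),
        intervalIntegral.integral_const_mul, intervalIntegral.integral_const_mul]
    rw [← e]
    exact key2'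
  have hA0 : 0 ≤ A := intervalIntegral.integral_nonneg hh.le (fun t _ => sq_nonneg _)
  have hB0 : 0 ≤ B := intervalIntegral.integral_nonneg hh.le (fun t _ => sq_nonneg _)
  have hN2 : N ^ 2 < 1 := by nlinarith
  have hcoef : 0 < 4 * N ^ 2 * (1 - N ^ 2) :=
    mul_pos (by positivity) (by linarith)
  -- from key1 : 2N²W = -c h, so -2N²cW = c²h
  have hcW : -(2 * N ^ 2 * c * W) = c ^ 2 * h := by linear_combination (-c) * key1
  have hsum : 4 * N ^ 2 * (1 - N ^ 2) * A + c ^ 2 * h + Rc * B = 0 := by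
    have h' := expand
    field_simp [hRc.ne'] at h'
    linarith [h', hcW]
  have hch : 0 ≤ c ^ 2 * h := mul_nonneg (sq_nonneg c) hh.le
  have hRB : 0 ≤ Rc * B := mul_nonneg hRc.le hB0
  have hcA : 0 ≤ 4 * N ^ 2 * (1 - N ^ 2) * A := mul_nonneg hcoef.le hA0
  have hAterm : 4 * N ^ 2 * (1 - N ^ 2) * A = 0 := by linarith
  have hAz : A = 0 := by
    rcases mul_eq_zero.mp hAterm with h' | h'
    · exact absurd h' hcoef.ne'
    · exact h'
  have hcz : c = 0 := by
    have h2 : c ^ 2 * h = 0 := by linarith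
    have := mul_eq_zero.mp h2
    rcases this with h' | h'
    · exact pow_eq_zero_iff two_ne_zero |>.mp h'
    · exact absurd h' hh.ne'
  -- w vanishes on s
  have hwz : ∀ t ∈ s, w t = 0 := by
    intro t ht
    have := eq_zero_of_nonneg_of_integral_zero hh (hcw.pow 2)
      (fun t _ => sq_nonneg (w t)) hAz t ht
    exact pow_eq_zero_iff two_ne_zero |>.mp this
  -- hence u' = 0 on s and u is constant
  have hu1z : ∀ x ∈ Set.Ico (0:ℝ) h, derivWithin u s x = 0 := by
    intro x hx
    have hxs : x ∈ s := Set.Ico_subset_Icc_self hx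
    rw [← hu1def, hu1eq x hxs, hwz x hxs, hcz]
    ring
  have huz := constant_of_derivWithin_zero hud hu1z
  intro t ht
  refine ⟨?_, hwz t ht⟩
  rw [huz t ht, hu0]

lemma diff_solution (N Rc h q G : ℝ) (hh : 0 < h) (u₁ w₁ u₂ w₂ : ℝ → ℝ)
    (h1 : IsReducedSolution N Rc h q G u₁ w₁) (h2 : IsReducedSolution N Rc h q G u₂ w₂) :
    IsReducedSolution N Rc h 0 0 (fun t => u₁ t - u₂ t) (fun t => w₁ t - w₂ t) := by
  obtain ⟨hu₁, hw₁, heq1₁, heq2₁, hu0₁, huh₁, hw0₁, hwh₁⟩ := h1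
  obtain ⟨hu₂, hw₂, heq1₂, heq2₂, hu0₂, huh₂, hw0₂, hwh₂⟩ := h2
  set s : Set ℝ := Set.Icc 0 h with hs
  have hsU : UniqueDiffOn ℝ s := uniqueDiffOn_Icc hh
  have hud₁ : DifferentiableOn ℝ u₁ s := hu₁.differentiableOn (by norm_num)
  have hud₂ : DifferentiableOn ℝ u₂ s := hu₂.differentiableOn (by norm_num)
  have hwd₁ : DifferentiableOn ℝ w₁ s := hw₁.differentiableOn (by norm_num)
  have hwd₂ : DifferentiableOn ℝ w₂ s := hw₂.differentiableOn (by norm_num)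
  have hu1d₁ : DifferentiableOn ℝ (derivWithin u₁ s) s :=
    (hu₁.derivWithin hsU (m := 1) (by norm_num)).differentiableOn (by norm_num)
  have hu1d₂ : DifferentiableOn ℝ (derivWithin u₂ s) s :=
    (hu₂.derivWithin hsU (m := 1) (by norm_num)).differentiableOn (by norm_num)
  have hw1d₁ : DifferentiableOn ℝ (derivWithin w₁ s) s :=
    (hw₁.derivWithin hsU (m := 1) (by norm_num)).differentiableOn (by norm_num)
  have hw1d₂ : DifferentiableOn ℝ (derivWithin w₂ s) s :=
    (hw₂.derivWithin hsU (m := 1) (by norm_num)).differentiableOn (by norm_num)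
  have hduEq : Set.EqOn (derivWithin (fun t => u₁ t - u₂ t) s)
      (fun t => derivWithin u₁ s t - derivWithin u₂ s t) s := fun t ht =>
    derivWithin_fun_sub (hud₁ t ht) (hud₂ t ht)
  have hdwEq : Set.EqOn (derivWithin (fun t => w₁ t - w₂ t) s)
      (fun t => derivWithin w₁ s t - derivWithin w₂ s t) s := fun t ht =>
    derivWithin_fun_sub (hwd₁ t ht) (hwd₂ t ht)
  have hdu2 : ∀ t ∈ s, derivWithin (derivWithin (fun t => u₁ t - u₂ t) s) s t
      = derivWithin (derivWithin u₁ s) s t - derivWithin (derivWithin u₂ s) s t := by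
    intro t ht
    rw [derivWithin_congr hduEq (hduEq ht)]
    exact derivWithin_fun_sub (hu1d₁ t ht) (hu1d₂ t ht)
  have hdw2 : ∀ t ∈ s, derivWithin (derivWithin (fun t => w₁ t - w₂ t) s) s t
      = derivWithin (derivWithin w₁ s) s t - derivWithin (derivWithin w₂ s) s t := by
    intro t ht
    rw [derivWithin_congr hdwEq (hdwEq ht)]
    exact derivWithin_fun_sub (hw1d₁ t ht) (hw1d₂ t ht)
  refine ⟨hu₁.sub hu₂, hw₁.sub hw₂, ?_, ?_, by simp [hu0₁, hu0₂], by simp [huh₁, huh₂],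
    by simp [hw0₁, hw0₂], by simp [hwh₁, hwh₂]⟩
  · intro t ht
    rw [hdu2 t ht, hdwEq ht]
    have e1 := heq1₁ t ht
    have e2 := heq1₂ t ht
    simp only
    rw [e1, e2]
    ring
  · intro t ht
    rw [hdw2 t ht, hduEq ht]
    have e1 := heq2₁ t ht
    have e2 := heq2₂ t ht
    simp only
    linarith

/-- A solution of the homogeneous reduced micropolar boundary-value problem
vanishes on `[0, h]`; consequently, for any forcing constants `q, G`, the
reduced problem has at most one solution. -/
theorem reduced_micropolar_uniqueness
    (N Rc h : ℝ) (hN0 : 0 < N) (hN1 : N < 1) (hRc : 0 < Rc) (hh : 0 < h)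
    (u w : ℝ → ℝ) (hsol : IsReducedSolution N Rc h 0 0 u w) :
    (∀ t ∈ Set.Icc (0 : ℝ) h, u t = 0 ∧ w t = 0) ∧
    (∀ (q G : ℝ) (u₁ w₁ u₂ w₂ : ℝ → ℝ),
      IsReducedSolution N Rc h q G u₁ w₁ → IsReducedSolution N Rc h q G u₂ w₂ →
      ∀ t ∈ Set.Icc (0 : ℝ) h, u₁ t = u₂ t ∧ w₁ t = w₂ t) := by
  refine ⟨hom_vanish N Rc h hN0 hN1 hRc hh u w hsol, ?_⟩
  intro q G u₁ w₁ u₂ w₂ h1 h2 t ht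
  have hdiff := diff_solution N Rc h q G hh u₁ w₁ u₂ w₂ h1 h2
  have := hom_vanish N Rc h hN0 hN1 hRc hh _ _ hdiff t ht
  constructor
  · have := this.1; linarith
  · have := this.2; linarith
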